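/- Let K_i = V_i ⊗ U_i with U_i, V_i ∈ S++^n, and let α₁,…,α_n be the eigenvalues of V₀^{1/2} V₁ V₀^{1/2} and β₁,…,β_n the eigenvalues of U₀^{1/2} U₁ U₀^{1/2}. Then tr((K₀^{1/2} K₁ K₀^{1/2})^{1/2}) = Σ_{p=1}^n Σ_{q=1}^n √(α_p β_q). -/

import Mathlib

open Matrix Kronecker

/-- The positive semidefinite square root of a positive semidefinite matrix,
extended by `0` to all matrices.  On symmetric positive definite matrices this
is the unique symmetric positive definite square root. -/
noncomputable def matSqrt {m : Type*} [Fintype m] [DecidableEq m]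
    (A : Matrix m m ℝ) : Matrix m m ℝ :=
  open scoped Classical in
  if h : A.PosSemidef then
    (h.1.eigenvectorUnitary : Matrix m m ℝ) * diagonal ((↑) ∘ Real.sqrt ∘ h.1.eigenvalues) *
      (star h.1.eigenvectorUnitary : Matrix m m ℝ)
  else 0

/-- The eigenvalue tuple of a Hermitian matrix, extended by `0`. -/
noncomputable def eigs {m : Type*} [Fintype m] [DecidableEq m]
    (A : Matrix m m ℝ) : m → ℝ :=
  open scoped Classical in
  if h : A.IsHermitian then h.eigenvalues else 0

/-- The square root of a positive semidefinite matrix (removed from Mathlib; restated here). -/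
noncomputable def Matrix.PosSemidef.sqrt {m : Type*} [Fintype m] [DecidableEq m]
    {A : Matrix m m ℝ} (h : A.PosSemidef) : Matrix m m ℝ :=
  (h.1.eigenvectorUnitary : Matrix m m ℝ) * diagonal ((↑) ∘ Real.sqrt ∘ h.1.eigenvalues) *
    (star h.1.eigenvectorUnitary : Matrix m m ℝ)

section sqrtAPI
open scoped MatrixOrder

lemma Matrix.PosSemidef.sqrt_eq_cfc {m : Type*} [Fintype m] [DecidableEq m]
    {A : Matrix m m ℝ} (h : A.PosSemidef) : h.sqrt = CFC.sqrt A := by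
  rw [CFC.sqrt_eq_real_sqrt A h.nonneg, cfcₙ_eq_cfc, h.1.cfc_eq, Matrix.IsHermitian.cfc,
    Unitary.conjStarAlgAut_apply]
  rfl

lemma Matrix.PosSemidef.posSemidef_sqrt {m : Type*} [Fintype m] [DecidableEq m]
    {A : Matrix m m ℝ} (h : A.PosSemidef) : h.sqrt.PosSemidef := by
  rw [h.sqrt_eq_cfc]; exact (CFC.sqrt_nonneg A).posSemidef

lemma Matrix.PosSemidef.sqrt_mul_self {m : Type*} [Fintype m] [DecidableEq m]
    {A : Matrix m m ℝ} (h : A.PosSemidef) : h.sqrt * h.sqrt = A := by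
  rw [h.sqrt_eq_cfc]; exact CFC.sqrt_mul_sqrt_self A h.nonneg

lemma Matrix.PosSemidef.eq_sqrt_of_sq_eq {m : Type*} [Fintype m] [DecidableEq m]
    {A : Matrix m m ℝ} (hA : A.PosSemidef) (B : Matrix m m ℝ) {hB : B.PosSemidef}
    (h : A ^ 2 = B) : A = hB.sqrt := by
  rw [hB.sqrt_eq_cfc]
  exact (CFC.sqrt_unique (by rw [← sq]; exact h) hA.nonneg).symm

end sqrtAPI

lemma matSqrt_of_posSemidef {m : Type*} [Fintype m] [DecidableEq m]
    {A : Matrix m m ℝ} (h : A.PosSemidef) : matSqrt A = h.sqrt := by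
  rw [matSqrt, dif_pos h]; rfl

lemma eigs_of_isHermitian {m : Type*} [Fintype m] [DecidableEq m]
    {A : Matrix m m ℝ} (h : A.IsHermitian) : eigs A = h.eigenvalues := by
  rw [eigs, dif_pos h]

lemma posSemidef_kron {m p : Type*} [Fintype m] [DecidableEq m] [Fintype p] [DecidableEq p]
    {A : Matrix m m ℝ} {B : Matrix p p ℝ}
    (hA : A.PosSemidef) (hB : B.PosSemidef) : (A ⊗ₖ B).PosSemidef := by
  exact hA.kronecker hB

lemma trace_sqrt_psd {m : Type*} [Fintype m] [DecidableEq m]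
    {A : Matrix m m ℝ} (hA : A.PosSemidef) :
    hA.sqrt.trace = ∑ i, Real.sqrt (hA.1.eigenvalues i) := by
  rw [Matrix.PosSemidef.sqrt, Matrix.trace_mul_cycle,
    Unitary.coe_star_mul_self, Matrix.one_mul, Matrix.trace_diagonal]
  simp

lemma sqrt_kron {m p : Type*} [Fintype m] [DecidableEq m] [Fintype p] [DecidableEq p]
    {A : Matrix m m ℝ} {B : Matrix p p ℝ}
    (hA : A.PosSemidef) (hB : B.PosSemidef) :
    (posSemidef_kron hA hB).sqrt = hA.sqrt ⊗ₖ hB.sqrt := by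
  refine ((posSemidef_kron hA.posSemidef_sqrt hB.posSemidef_sqrt).eq_sqrt_of_sq_eq _ ?_).symm
  rw [pow_two, ← Matrix.mul_kronecker_mul, PosSemidef.sqrt_mul_self, PosSemidef.sqrt_mul_self]

lemma sqrt_congr {m : Type*} [Fintype m] [DecidableEq m]
    {A B : Matrix m m ℝ} (h : A = B) (hA : A.PosSemidef) (hB : B.PosSemidef) :
    hA.sqrt = hB.sqrt := by subst h; rfl

lemma psd_conj {m : Type*} [Fintype m] [DecidableEq m]
    {A B : Matrix m m ℝ} (hA : A.PosDef) (hB : B.PosSemidef) :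
    (hB.sqrt * A * hB.sqrt).PosSemidef := by
  have := hA.posSemidef.mul_mul_conjTranspose_same hB.sqrt
  rwa [hB.posSemidef_sqrt.1] at this

/-- With `α` the eigenvalues of `V₀^{1/2}V₁V₀^{1/2}` and `β` those of
`U₀^{1/2}U₁U₀^{1/2}`, one has
`tr((K₀^{1/2} K₁ K₀^{1/2})^{1/2}) = Σ_p Σ_q √(α_p β_q)`. -/
theorem trace_sqrt_kronecker_eigenvalues {n : ℕ}
    (U₀ U₁ V₀ V₁ : Matrix (Fin n) (Fin n) ℝ)
    (hU₀ : U₀.PosDef) (hU₁ : U₁.PosDef) (hV₀ : V₀.PosDef) (hV₁ : V₁.PosDef) :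
    (matSqrt (matSqrt (V₀ ⊗ₖ U₀) * (V₁ ⊗ₖ U₁) * matSqrt (V₀ ⊗ₖ U₀))).trace
      = ∑ p : Fin n, ∑ q : Fin n,
          Real.sqrt (eigs (matSqrt V₀ * V₁ * matSqrt V₀) p
            * eigs (matSqrt U₀ * U₁ * matSqrt U₀) q) := by
  have hK : (V₀ ⊗ₖ U₀).PosSemidef := posSemidef_kron hV₀.posSemidef hU₀.posSemidef
  have hA : (hV₀.posSemidef.sqrt * V₁ * hV₀.posSemidef.sqrt).PosSemidef :=
    psd_conj hV₁ hV₀.posSemidef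
  have hB : (hU₀.posSemidef.sqrt * U₁ * hU₀.posSemidef.sqrt).PosSemidef :=
    psd_conj hU₁ hU₀.posSemidef
  have hMeq : matSqrt (V₀ ⊗ₖ U₀) * (V₁ ⊗ₖ U₁) * matSqrt (V₀ ⊗ₖ U₀)
      = (hV₀.posSemidef.sqrt * V₁ * hV₀.posSemidef.sqrt)
        ⊗ₖ (hU₀.posSemidef.sqrt * U₁ * hU₀.posSemidef.sqrt) := by
    rw [matSqrt_of_posSemidef hK, sqrt_kron hV₀.posSemidef hU₀.posSemidef,
      ← Matrix.mul_kronecker_mul, ← Matrix.mul_kronecker_mul]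
  have hM : (matSqrt (V₀ ⊗ₖ U₀) * (V₁ ⊗ₖ U₁) * matSqrt (V₀ ⊗ₖ U₀)).PosSemidef := by
    rw [hMeq]; exact posSemidef_kron hA hB
  have key : matSqrt (matSqrt (V₀ ⊗ₖ U₀) * (V₁ ⊗ₖ U₁) * matSqrt (V₀ ⊗ₖ U₀))
      = hA.sqrt ⊗ₖ hB.sqrt := by
    rw [matSqrt_of_posSemidef hM]
    rw [sqrt_congr hMeq hM (posSemidef_kron hA hB), sqrt_kron]
  rw [key, Matrix.trace_kronecker, trace_sqrt_psd hA, trace_sqrt_psd hB,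
    matSqrt_of_posSemidef hV₀.posSemidef, matSqrt_of_posSemidef hU₀.posSemidef,
    eigs_of_isHermitian hA.1, eigs_of_isHermitian hB.1, Finset.sum_mul_sum]
  exact Finset.sum_congr rfl fun p _ => Finset.sum_congr rfl fun q _ =>
    (Real.sqrt_mul (hA.eigenvalues_nonneg p) _).symm
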